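/- arXiv:1308.4983 — 3 statements merged into one kernel-verified Lean document; each statement's English description precedes it below -/
import Mathlib

section
/- Let I be the radical ideal of a finite set of points Z in P^n (over an algebraically closed field of characteristic zero). Then for every k ≥ 1, the k-th symbolic power I^{(k)} equals the k-th differential power I^{<k>} = ⋂_{P ∈ Z} m_P^k, where m_P is the maximal homogeneous ideal of the point P. -/
open MvPolynomial

noncomputable section

/-- Apply a list of partial derivatives to a polynomial. -/
def derivList {n : ℕ} (L : List (Fin (n + 1))) (f : MvPolynomial (Fin (n + 1)) ℂ) :
    MvPolynomial (Fin (n + 1)) ℂ :=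
  L.foldr (fun i g => MvPolynomial.pderiv i g) f

/-- `f` vanishes to order at least `k` at the point with homogeneous coordinates `p`:
all partial derivatives of total order `< k` vanish at `p`. -/
def VanishTo {n : ℕ} (f : MvPolynomial (Fin (n + 1)) ℂ) (p : Fin (n + 1) → ℂ) (k : ℕ) : Prop :=
  ∀ L : List (Fin (n + 1)), L.length < k → MvPolynomial.eval p (derivList L f) = 0

/-- The `k`-th differential power of the ideal of `Z`: all polynomials vanishing to order
at least `k` at every point of `Z`. -/
def DiffPow {n : ℕ} (Z : Set (Fin (n + 1) → ℂ)) (k : ℕ) : Set (MvPolynomial (Fin (n + 1)) ℂ) :=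
  {f | ∀ p ∈ Z, VanishTo f p k}

/-- Initial degree: least degree of a nonzero homogeneous element of `S`. -/
def alphaSet {n : ℕ} (S : Set (MvPolynomial (Fin (n + 1)) ℂ)) : ℕ :=
  sInf {d | ∃ f ∈ S, f ≠ 0 ∧ MvPolynomial.IsHomogeneous f d}

/-- `α(I^{(k)})` for `I` the radical ideal of the point set `Z` (symbolic powers of such
ideals coincide with differential powers by Nagata–Zariski). -/
def alphaZ {n : ℕ} (Z : Set (Fin (n + 1) → ℂ)) (k : ℕ) : ℕ :=
  alphaSet (DiffPow Z k)

/-- Two homogeneous coordinate vectors define the same projective point. -/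
def ProjEq {n : ℕ} (p q : Fin (n + 1) → ℂ) : Prop :=
  ∃ t : ℂ, t ≠ 0 ∧ q = t • p

/-- The hyperplanes with covectors `a i` are in general position: every at most `n + 1`
of the covectors are linearly independent (equivalently, any `n` of the hyperplanes meet
in exactly one point and no `n + 1` of them have a common point). -/
def GenPos {n d : ℕ} (a : Fin d → (Fin (n + 1) → ℂ)) : Prop :=
  ∀ S : Finset (Fin d), S.card ≤ n + 1 →
    LinearIndependent ℂ (fun i : {x : Fin d // x ∈ S} => a i.1)

/-- The linear form with covector `a`. -/
def linForm {n : ℕ} (a : Fin (n + 1) → ℂ) : MvPolynomial (Fin (n + 1)) ℂ :=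
  ∑ i, MvPolynomial.C (a i) * MvPolynomial.X i

/-- The homogeneous vanishing ideal of the projective point with homogeneous
coordinates `p` (the "maximal homogeneous ideal" `m_P`): all polynomials vanishing on the
line through `p`. -/
def homIdealOfPoint {n : ℕ} (p : Fin (n + 1) → ℂ) : Ideal (MvPolynomial (Fin (n + 1)) ℂ) where
  carrier := {f | ∀ t : ℂ, MvPolynomial.eval (t • p) f = 0}
  zero_mem' := by intro t; simp
  add_mem' := by intro f g hf hg t; simp [hf t, hg t]
  smul_mem' := by intro c f hf t; simp [smul_eq_mul, hf t]

/-- The `k`-th symbolic power `I^{(k)} = R ∩ ⋂_{p ∈ Ass(I)} I^k R_p`. -/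
def symbolicPower {A : Type*} [CommRing A] (I : Ideal A) (k : ℕ) : Ideal A :=
  ⨅ P : {P : Ideal A // P ∈ I.minimalPrimes},
    haveI : P.1.IsPrime := P.2.1.1
    Ideal.comap (algebraMap A (Localization P.1.primeCompl))
      (Ideal.map (algebraMap A (Localization P.1.primeCompl)) (I ^ k))


lemma NZ.eval_linForm {n : ℕ} (a q : Fin (n + 1) → ℂ) :
    MvPolynomial.eval q (linForm a) = ∑ i, a i * q i := by
  simp [linForm]

lemma NZ.mem_homIdealOfPoint {n : ℕ} {p : Fin (n + 1) → ℂ} {f : MvPolynomial (Fin (n + 1)) ℂ} :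
    f ∈ homIdealOfPoint p ↔ ∀ t : ℂ, MvPolynomial.eval (t • p) f = 0 := Iff.rfl

def NZ.psi {n : ℕ} (p : Fin (n + 1) → ℂ) :
    MvPolynomial (Fin (n + 1)) ℂ →ₐ[ℂ] Polynomial ℂ :=
  MvPolynomial.aeval (fun i => Polynomial.C (p i) * Polynomial.X)

lemma NZ.psi_eval {n : ℕ} (p : Fin (n + 1) → ℂ) (f : MvPolynomial (Fin (n + 1)) ℂ) (t : ℂ) :
    (NZ.psi p f).eval t = MvPolynomial.eval (t • p) f := by
  have h : (Polynomial.evalRingHom t).comp (NZ.psi p).toRingHom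
      = (MvPolynomial.eval (t • p)) := by
    apply MvPolynomial.ringHom_ext
    · intro a; simp [NZ.psi]
    · intro i
      simp [NZ.psi]
      ring
  exact DFunLike.congr_fun h f

lemma NZ.homIdealOfPoint_eq_ker {n : ℕ} (p : Fin (n + 1) → ℂ) :
    homIdealOfPoint p = RingHom.ker (NZ.psi p) := by
  ext f
  simp only [NZ.mem_homIdealOfPoint, RingHom.mem_ker]
  constructor
  · intro h
    apply Polynomial.funext
    intro t
    rw [NZ.psi_eval, h t, Polynomial.eval_zero]
  · intro h t
    rw [← NZ.psi_eval, h, Polynomial.eval_zero]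

lemma NZ.homIdealOfPoint_isPrime {n : ℕ} (p : Fin (n + 1) → ℂ) :
    (homIdealOfPoint p).IsPrime := by
  rw [NZ.homIdealOfPoint_eq_ker]
  exact RingHom.ker_isPrime _

lemma NZ.homIdealOfPoint_smul {n : ℕ} {p : Fin (n + 1) → ℂ} {c : ℂ} (hc : c ≠ 0) :
    homIdealOfPoint (c • p) = homIdealOfPoint p := by
  ext f
  simp only [NZ.mem_homIdealOfPoint]
  constructor
  · intro h t
    have := h (t * c⁻¹)
    rwa [smul_smul, mul_assoc, inv_mul_cancel₀ hc, mul_one] at this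
  · intro h t
    rw [smul_smul]; exact h _

lemma NZ.exists_sep {n : ℕ} {p q : Fin (n + 1) → ℂ} (h : p ∉ Submodule.span ℂ {q}) :
    ∃ a : Fin (n + 1) → ℂ, (∑ i, a i * q i) = 0 ∧ (∑ i, a i * p i) ≠ 0 := by
  obtain ⟨φ, hφp, hφq⟩ := Submodule.exists_dual_map_eq_bot_of_notMem h inferInstance
  have key : ∀ v : Fin (n + 1) → ℂ,
      (∑ i, φ (fun j => if i = j then 1 else 0) * v i) = φ v := by
    intro v
    rw [LinearMap.pi_apply_eq_sum_univ φ v]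
    exact Finset.sum_congr rfl fun i _ => by rw [smul_eq_mul, mul_comm]
  refine ⟨fun i => φ (fun j => if i = j then 1 else 0), ?_, ?_⟩
  · have hq0 : φ q = 0 := by
      have hm : φ q ∈ (Submodule.span ℂ {q}).map φ :=
        Submodule.mem_map_of_mem (Submodule.mem_span_singleton_self q)
      rw [hφq] at hm; simpa using hm
    exact (key q).trans hq0
  · intro h0
    exact hφp ((key p).symm.trans h0)

lemma NZ.exists_sep_form {n : ℕ} {p q : Fin (n + 1) → ℂ} (hp : p ≠ 0) (hq : q ≠ 0)
    (hne : homIdealOfPoint q ≠ homIdealOfPoint p) :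
    ∃ g, g ∈ homIdealOfPoint q ∧ MvPolynomial.eval p g ≠ 0 := by
  have hq_span : q ∉ Submodule.span ℂ {p} := by
    intro hmem
    obtain ⟨c, hc⟩ := Submodule.mem_span_singleton.mp hmem
    have hc0 : c ≠ 0 := by rintro rfl; rw [zero_smul] at hc; exact hq hc.symm
    exact hne (hc ▸ NZ.homIdealOfPoint_smul hc0)
  have hp_span : p ∉ Submodule.span ℂ {q} := by
    intro hmem
    obtain ⟨c, hc⟩ := Submodule.mem_span_singleton.mp hmem
    have hc0 : c ≠ 0 := by rintro rfl; rw [zero_smul] at hc; exact hp hc.symm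
    exact hq_span (Submodule.mem_span_singleton.mpr
      ⟨c⁻¹, by rw [← hc, smul_smul, inv_mul_cancel₀ hc0, one_smul]⟩)
  obtain ⟨a, haq, hap⟩ := NZ.exists_sep hp_span
  refine ⟨linForm a, ?_, ?_⟩
  · intro t
    rw [NZ.eval_linForm]
    have : ∀ i ∈ Finset.univ, a i * (t • q) i = t * (a i * q i) := by
      intro i _; simp [Pi.smul_apply, smul_eq_mul]; ring
    rw [Finset.sum_congr rfl this, ← Finset.mul_sum, haq, mul_zero]
  · rwa [NZ.eval_linForm]

namespace NZ


def e0 (n : ℕ) : Fin (n + 1) → ℂ := fun j => if j = 0 then 1 else 0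

def wt {n : ℕ} (d : Fin (n + 1) →₀ ℕ) : ℕ := ∑ i, if i = 0 then 0 else d i

lemma wt_add {n : ℕ} (a b : Fin (n + 1) →₀ ℕ) : wt (a + b) = wt a + wt b := by
  unfold wt
  rw [← Finset.sum_add_distrib]
  refine Finset.sum_congr rfl fun i _ => ?_
  by_cases h : i = 0 <;> simp [h]

lemma wt_single {n : ℕ} {i : Fin (n + 1)} (hi : i ≠ 0) (m : ℕ) :
    wt (Finsupp.single i m) = m := by
  unfold wt
  rw [Finset.sum_eq_single i]
  · simp [hi]
  · intro j _ hj
    rcases eq_or_ne j 0 with h | h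
    · simp [h]
    · simp [h, Finsupp.single_eq_of_ne' (Ne.symm hj)]
  · intro h; exact absurd (Finset.mem_univ i) h

lemma exists_of_wt_pos {n : ℕ} {d : Fin (n + 1) →₀ ℕ} (hd : 1 ≤ wt d) :
    ∃ i, i ≠ 0 ∧ d i ≠ 0 := by
  by_contra h
  push_neg at h
  have : wt d = 0 := by
    apply Finset.sum_eq_zero
    intro i _
    rcases eq_or_ne i 0 with hh | hh
    · simp [hh]
    · simp [hh, h i hh]
  omega

lemma eq_single_of_wt_eq_zero {n : ℕ} {d : Fin (n + 1) →₀ ℕ} (hd : wt d = 0) :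
    d = Finsupp.single 0 (d 0) := by
  have h0 : ∀ i, i ≠ (0 : Fin (n + 1)) → d i = 0 := by
    intro i hi
    by_contra hne
    have h1 : 1 ≤ wt d := by
      unfold wt
      calc 1 ≤ d i := Nat.one_le_iff_ne_zero.mpr hne
        _ = if i = 0 then 0 else d i := by simp [hi]
        _ ≤ ∑ j, if j = 0 then 0 else d j :=
          Finset.single_le_sum (f := fun j => if j = 0 then 0 else d j)
            (fun _ _ => Nat.zero_le _) (Finset.mem_univ i)
    omega
  ext i
  rcases eq_or_ne i 0 with h | h
  · simp [h]
  · simp [Finsupp.single_eq_of_ne' (Ne.symm h), h0 i h]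

def Jid (n : ℕ) (k : ℕ) : Ideal (MvPolynomial (Fin (n + 1)) ℂ) where
  carrier := {f | ∀ d, MvPolynomial.coeff d f ≠ 0 → k ≤ wt d}
  zero_mem' := by intro d hd; simp at hd
  add_mem' := by
    intro f g hf hg d hd
    rw [MvPolynomial.coeff_add] at hd
    by_cases h : MvPolynomial.coeff d f = 0
    · exact hg d (by rwa [h, zero_add] at hd)
    · exact hf d h
  smul_mem' := by
    intro c f hf d hd
    rw [smul_eq_mul, MvPolynomial.coeff_mul] at hd
    obtain ⟨x, hx, hne⟩ := Finset.exists_ne_zero_of_sum_ne_zero hd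
    have h2 : MvPolynomial.coeff x.2 f ≠ 0 := right_ne_zero_of_mul hne
    have hxd : x.1 + x.2 = d := Finset.HasAntidiagonal.mem_antidiagonal.mp hx
    calc k ≤ wt x.2 := hf x.2 h2
      _ ≤ wt x.1 + wt x.2 := Nat.le_add_left _ _
      _ = wt d := by rw [← wt_add, hxd]

lemma Jid_mul {n a b : ℕ} : Jid n a * Jid n b ≤ Jid n (a + b) := by
  rw [Ideal.mul_le]
  intro f hf g hg d hd
  rw [MvPolynomial.coeff_mul] at hd
  obtain ⟨x, hx, hne⟩ := Finset.exists_ne_zero_of_sum_ne_zero hd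
  have hxd : x.1 + x.2 = d := Finset.HasAntidiagonal.mem_antidiagonal.mp hx
  calc a + b ≤ wt x.1 + wt x.2 :=
        Nat.add_le_add (hf x.1 (left_ne_zero_of_mul hne)) (hg x.2 (right_ne_zero_of_mul hne))
    _ = wt d := by rw [← wt_add, hxd]

def Phi (n : ℕ) :
    MvPolynomial (Fin (n + 1)) ℂ →ₐ[ℂ] Polynomial (MvPolynomial (Fin (n + 1)) ℂ) :=
  MvPolynomial.aeval
    (fun i => Polynomial.X ^ (if i = (0 : Fin (n + 1)) then 0 else 1)
      * Polynomial.C (MvPolynomial.X i))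

lemma Phi_monomial {n : ℕ} (d : Fin (n + 1) →₀ ℕ) (c : ℂ) :
    Phi n (MvPolynomial.monomial d c)
      = Polynomial.monomial (wt d) (MvPolynomial.monomial d c) := by
  rw [Phi, MvPolynomial.aeval_monomial, Finsupp.prod]
  rw [Finset.prod_congr rfl (fun i (_ : i ∈ d.support) =>
    (mul_pow (Polynomial.X ^ (if i = (0 : Fin (n + 1)) then 0 else 1))
      (Polynomial.C (MvPolynomial.X i)) (d i)).trans
      (by rw [← pow_mul, ← Polynomial.C_pow]))]
  rw [Finset.prod_mul_distrib, Finset.prod_pow_eq_pow_sum, ← map_prod]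
  have hsum : (∑ i ∈ d.support, (if i = (0 : Fin (n + 1)) then 0 else 1) * d i) = wt d := by
    rw [Finset.sum_congr rfl (fun i (_ : i ∈ d.support) =>
      (by by_cases h : i = 0 <;> simp [h] :
        (if i = (0 : Fin (n + 1)) then 0 else 1) * d i
          = if i = (0 : Fin (n + 1)) then 0 else d i))]
    exact Finset.sum_subset (Finset.subset_univ _)
      (fun i _ hi => by simp [Finsupp.notMem_support_iff.mp hi])
  have hprod : (∏ i ∈ d.support, MvPolynomial.X i ^ d i)
      = (MvPolynomial.monomial d (1 : ℂ)) := by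
    rw [MvPolynomial.monomial_eq, MvPolynomial.C_1, one_mul, Finsupp.prod]
  rw [hsum, hprod]
  have h2 : algebraMap ℂ (Polynomial (MvPolynomial (Fin (n + 1)) ℂ)) c
      = Polynomial.C (MvPolynomial.C c) := by
    rw [Polynomial.algebraMap_apply, MvPolynomial.algebraMap_eq]
  rw [h2, ← Polynomial.C_mul_X_pow_eq_monomial,
    show (MvPolynomial.monomial d c) = MvPolynomial.C c * MvPolynomial.monomial d (1 : ℂ) from
      by rw [MvPolynomial.C_mul_monomial, mul_one],
    Polynomial.C_mul]
  ring

lemma coeff_coeff_Phi {n : ℕ} (f : MvPolynomial (Fin (n + 1)) ℂ) (a : ℕ)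
    (d : Fin (n + 1) →₀ ℕ) :
    MvPolynomial.coeff d ((Phi n f).coeff a)
      = if wt d = a then MvPolynomial.coeff d f else 0 := by
  induction f using MvPolynomial.induction_on' with
  | monomial u c =>
    rw [Phi_monomial, Polynomial.coeff_monomial]
    by_cases hud : u = d
    · subst hud
      by_cases h : wt u = a
      · simp [h]
      · simp [h, Ne.symm h]
    · rcases eq_or_ne (wt u) a with h | h
      · subst h
        rcases eq_or_ne (wt d) (wt u) with h2 | h2
        · simp [h2, MvPolynomial.coeff_monomial, hud]
        · simp [h2, MvPolynomial.coeff_monomial, hud]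
      · rw [if_neg h, MvPolynomial.coeff_zero]
        rcases eq_or_ne (wt d) a with h2 | h2
        · simp [h2, MvPolynomial.coeff_monomial, hud]
        · simp [h2]
  | add p q hp hq =>
    rw [map_add, Polynomial.coeff_add, MvPolynomial.coeff_add, MvPolynomial.coeff_add, hp, hq]
    split_ifs <;> simp

lemma mem_Jid_iff_dvd {n : ℕ} (f : MvPolynomial (Fin (n + 1)) ℂ) (k : ℕ) :
    f ∈ Jid n k ↔ (Polynomial.X : Polynomial (MvPolynomial (Fin (n + 1)) ℂ)) ^ k ∣ Phi n f := by
  rw [Polynomial.X_pow_dvd_iff]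
  constructor
  · intro h a ha
    apply MvPolynomial.ext
    intro d
    rw [coeff_coeff_Phi, MvPolynomial.coeff_zero]
    rcases eq_or_ne (wt d) a with h2 | h2
    · rw [if_pos h2]
      by_contra hne
      exact absurd (h d hne) (by omega)
    · rw [if_neg h2]
  · intro h d hd
    by_contra hlt
    have h2 := h (wt d) (by omega)
    have := coeff_coeff_Phi f (wt d) d
    rw [h2, MvPolynomial.coeff_zero, if_pos rfl] at this
    exact hd this.symm

lemma Jid_primary {n k : ℕ} {s f : MvPolynomial (Fin (n + 1)) ℂ}
    (hs : s ∉ Jid n 1) (h : s * f ∈ Jid n k) : f ∈ Jid n k := by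
  rw [mem_Jid_iff_dvd] at hs h ⊢
  rw [map_mul] at h
  rw [pow_one] at hs
  exact (Polynomial.prime_X).pow_dvd_of_dvd_mul_left k hs h

lemma X_mem_m {n : ℕ} {i : Fin (n + 1)} (hi : i ≠ 0) :
    (MvPolynomial.X i : MvPolynomial (Fin (n + 1)) ℂ) ∈ homIdealOfPoint (e0 n) := by
  intro t
  rw [MvPolynomial.eval_X]
  simp [e0, hi]

lemma psi_e0_coeff {n : ℕ} (f : MvPolynomial (Fin (n + 1)) ℂ) (m : ℕ) :
    (psi (e0 n) f).coeff m = MvPolynomial.coeff (Finsupp.single 0 m) f := by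
  induction f using MvPolynomial.induction_on' with
  | monomial u c =>
    by_cases h : ∀ i ∈ u.support, i = (0 : Fin (n + 1))
    · have hu : u = Finsupp.single 0 (u 0) := by
        ext i
        rcases eq_or_ne i 0 with hi | hi
        · simp [hi]
        · rw [Finsupp.single_eq_of_ne' (Ne.symm hi)]
          by_contra hne
          exact hi (h i (Finsupp.mem_support_iff.mpr hne))
      rw [hu, psi, MvPolynomial.aeval_monomial,
        Finsupp.prod_single_index (by rw [pow_zero])]
      have he0 : e0 n 0 = 1 := by simp [e0]
      rw [he0, Polynomial.C_1, one_mul]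
      have halg : algebraMap ℂ (Polynomial ℂ) c = Polynomial.C c := rfl
      rw [halg, Polynomial.coeff_C_mul, Polynomial.coeff_X_pow, MvPolynomial.coeff_monomial]
      rcases eq_or_ne (u 0) m with hm | hm
      · simp [hm]
      · rw [if_neg (by omega), if_neg (by
          intro heq
          exact hm (by
            have := DFunLike.congr_fun heq (0 : Fin (n + 1))
            simpa using this)), mul_zero]
    · push_neg at h
      obtain ⟨i₀, hi₀mem, hi₀⟩ := h
      rw [psi, MvPolynomial.aeval_monomial, Finsupp.prod]
      rw [Finset.prod_eq_zero hi₀mem (by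
        have : e0 n i₀ = 0 := by simp [e0, hi₀]
        rw [this, Polynomial.C_0, zero_mul]
        exact zero_pow (Finsupp.mem_support_iff.mp hi₀mem)), mul_zero]
      have hne : ¬ u = Finsupp.single 0 m := by
        intro heq
        apply Finsupp.mem_support_iff.mp hi₀mem
        rw [heq, Finsupp.single_eq_of_ne' (Ne.symm hi₀)]
      rw [Polynomial.coeff_zero, MvPolynomial.coeff_monomial, if_neg hne]
  | add p q hp hq =>
    rw [map_add, Polynomial.coeff_add, MvPolynomial.coeff_add, hp, hq]

lemma m_e0_eq_J1 {n : ℕ} : homIdealOfPoint (e0 n) = Jid n 1 := by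
  apply le_antisymm
  · intro f hf
    intro d hd
    by_contra hlt
    have hw0 : wt d = 0 := by omega
    have hd0 : d = Finsupp.single 0 (d 0) := eq_single_of_wt_eq_zero hw0
    have hker : psi (e0 n) f = 0 := by
      rw [homIdealOfPoint_eq_ker] at hf
      exact hf
    have := psi_e0_coeff f (d 0)
    rw [hker, Polynomial.coeff_zero, ← hd0] at this
    exact hd this.symm
  · intro f hf t
    rw [MvPolynomial.eval_eq]
    apply Finset.sum_eq_zero
    intro d hd
    obtain ⟨i, hi, hdi⟩ := exists_of_wt_pos (hf d (MvPolynomial.mem_support_iff.mp hd))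
    rw [Finset.prod_eq_zero (Finsupp.mem_support_iff.mpr hdi)
      (show (t • e0 n) i ^ d i = 0 by
        have h1 : (t • e0 n) i = 0 := by simp [e0, hi]
        rw [h1]
        exact zero_pow hdi), mul_zero]

lemma monomial_mem_m_pow {n : ℕ} (k : ℕ) (d : Fin (n + 1) →₀ ℕ) (c : ℂ) (hd : k ≤ wt d) :
    MvPolynomial.monomial d c ∈ (homIdealOfPoint (e0 n)) ^ k := by
  induction k generalizing d with
  | zero => rw [pow_zero, Ideal.one_eq_top]; exact Submodule.mem_top
  | succ k ih =>
    obtain ⟨i, hi, hdi⟩ := exists_of_wt_pos (le_trans (Nat.le_add_left 1 k) hd)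
    have hle : Finsupp.single i 1 ≤ d := Finsupp.single_le_iff.mpr (Nat.one_le_iff_ne_zero.mpr hdi)
    have hsum : d - Finsupp.single i 1 + Finsupp.single i 1 = d := tsub_add_cancel_of_le hle
    have hwt : k ≤ wt (d - Finsupp.single i 1) := by
      have := wt_add (d - Finsupp.single i 1) (Finsupp.single i 1)
      rw [hsum, wt_single hi] at this
      omega
    have hsum' : Finsupp.single i 1 + (d - Finsupp.single i 1) = d :=
      (add_comm _ _).trans hsum
    have hfac : MvPolynomial.monomial d c
        = MvPolynomial.X i * MvPolynomial.monomial (d - Finsupp.single i 1) c := by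
      rw [← pow_one (MvPolynomial.X i), MvPolynomial.X_pow_eq_monomial,
        MvPolynomial.monomial_mul, one_mul, hsum']
    rw [hfac, pow_succ']
    exact Ideal.mul_mem_mul (X_mem_m hi) (ih _ hwt)

lemma m_pow_eq_J {n : ℕ} (k : ℕ) : (homIdealOfPoint (e0 n)) ^ k = Jid n k := by
  apply le_antisymm
  · induction k with
    | zero =>
      rw [pow_zero, Ideal.one_eq_top]
      intro f _ d _
      exact Nat.zero_le _
    | succ k ih =>
      rw [pow_succ]
      exact le_trans (Ideal.mul_mono ih (le_of_eq m_e0_eq_J1)) Jid_mul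
  · intro f hf
    rw [← MvPolynomial.support_sum_monomial_coeff f]
    apply Ideal.sum_mem
    intro d hd
    exact monomial_mem_m_pow k d _ (hf d (MvPolynomial.mem_support_iff.mp hd))



def sigma {n : ℕ} (T : (Fin (n + 1) → ℂ) →ₗ[ℂ] (Fin (n + 1) → ℂ)) :
    MvPolynomial (Fin (n + 1)) ℂ →ₐ[ℂ] MvPolynomial (Fin (n + 1)) ℂ :=
  MvPolynomial.aeval (fun i => linForm (fun j => T (fun l => if j = l then 1 else 0) i))

lemma eval_sigma {n : ℕ} (T : (Fin (n + 1) → ℂ) →ₗ[ℂ] (Fin (n + 1) → ℂ))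
    (q : Fin (n + 1) → ℂ) (f : MvPolynomial (Fin (n + 1)) ℂ) :
    MvPolynomial.eval q (sigma T f) = MvPolynomial.eval (T q) f := by
  have h : (MvPolynomial.eval q).comp (sigma T).toRingHom = MvPolynomial.eval (T q) := by
    apply MvPolynomial.ringHom_ext
    · intro a; simp [sigma]
    · intro i
      have lhs : MvPolynomial.eval q (sigma T (MvPolynomial.X i))
          = ∑ j, T (fun l => if j = l then 1 else 0) i * q j := by
        simp only [sigma, MvPolynomial.aeval_X]
        rw [eval_linForm]
      have rhs : (T q) i = ∑ j, T (fun l => if j = l then 1 else 0) i * q j := by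
        rw [LinearMap.pi_apply_eq_sum_univ T q]
        rw [Finset.sum_apply]
        exact Finset.sum_congr rfl fun j _ => by
          rw [Pi.smul_apply, smul_eq_mul, mul_comm]
      simp only [RingHom.coe_comp, Function.comp_apply, AlgHom.toRingHom_eq_coe,
        RingHom.coe_coe, MvPolynomial.eval_X]
      rw [lhs, rhs]
  exact DFunLike.congr_fun h f

def sigmaEquiv {n : ℕ} (T : (Fin (n + 1) → ℂ) ≃ₗ[ℂ] (Fin (n + 1) → ℂ)) :
    MvPolynomial (Fin (n + 1)) ℂ ≃ₐ[ℂ] MvPolynomial (Fin (n + 1)) ℂ :=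
  AlgEquiv.ofAlgHom (sigma T.toLinearMap) (sigma T.symm.toLinearMap)
    (AlgHom.ext fun f => MvPolynomial.funext fun x => by
      rw [AlgHom.comp_apply, eval_sigma, eval_sigma, AlgHom.id_apply]
      simp)
    (AlgHom.ext fun f => MvPolynomial.funext fun x => by
      rw [AlgHom.comp_apply, eval_sigma, eval_sigma, AlgHom.id_apply]
      simp)

lemma sigmaEquiv_apply {n : ℕ} (T : (Fin (n + 1) → ℂ) ≃ₗ[ℂ] (Fin (n + 1) → ℂ))
    (f : MvPolynomial (Fin (n + 1)) ℂ) :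
    sigmaEquiv T f = sigma T.toLinearMap f := rfl

def shear {n : ℕ} (v : Fin (n + 1) → ℂ) (hv : v 0 = 0) :
    (Fin (n + 1) → ℂ) ≃ₗ[ℂ] (Fin (n + 1) → ℂ) :=
  LinearEquiv.ofLinear
    (LinearMap.id + (LinearMap.proj 0).smulRight v)
    (LinearMap.id - (LinearMap.proj 0).smulRight v)
    (by
      ext q i
      simp [LinearMap.smulRight_apply, LinearMap.proj_apply, hv])
    (by
      ext q i
      simp [LinearMap.smulRight_apply, LinearMap.proj_apply, hv])

lemma shear_apply {n : ℕ} (v : Fin (n + 1) → ℂ) (hv : v 0 = 0) (q : Fin (n + 1) → ℂ) :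
    shear v hv q = q + (q 0) • v := rfl

lemma exists_linEquiv {n : ℕ} (p : Fin (n + 1) → ℂ) (hp : p ≠ 0) :
    ∃ T : (Fin (n + 1) → ℂ) ≃ₗ[ℂ] (Fin (n + 1) → ℂ), ∃ c : ℂ, c ≠ 0 ∧ T (e0 n) = c • p := by
  obtain ⟨j, hj⟩ : ∃ j, p j ≠ 0 := by
    by_contra h
    push_neg at h
    exact hp (funext h)
  set W := LinearEquiv.funCongrLeft ℂ ℂ (Equiv.swap (0 : Fin (n + 1)) j) with hW
  have hWapp : ∀ (x : Fin (n + 1) → ℂ) i, W x i = x (Equiv.swap (0 : Fin (n + 1)) j i) := by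
    intro x i
    rw [hW, LinearEquiv.funCongrLeft_apply, LinearMap.funLeft_apply]
  set r : Fin (n + 1) → ℂ := W p with hr
  have hr0 : r 0 = p j := by rw [hr, hWapp, Equiv.swap_apply_left]
  set v : Fin (n + 1) → ℂ := (p j)⁻¹ • r - e0 n with hv
  have hv0 : v 0 = 0 := by
    simp [hv, hr0, e0, inv_mul_cancel₀ hj]
  refine ⟨(shear v hv0).trans W.symm, (p j)⁻¹, inv_ne_zero hj, ?_⟩
  have h1 : shear v hv0 (e0 n) = (p j)⁻¹ • r := by
    rw [shear_apply]
    have : e0 n 0 = 1 := by simp [e0]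
    rw [this, one_smul, hv]
    abel
  rw [LinearEquiv.trans_apply, h1, map_smul]
  rw [hr, LinearEquiv.symm_apply_apply]

lemma homIdeal_pow_primary {n : ℕ} {p : Fin (n + 1) → ℂ} (hp : p ≠ 0) {k : ℕ}
    {s f : MvPolynomial (Fin (n + 1)) ℂ}
    (hs : s ∉ homIdealOfPoint p) (h : s * f ∈ (homIdealOfPoint p) ^ k) :
    f ∈ (homIdealOfPoint p) ^ k := by
  obtain ⟨T, c, hc, hT⟩ := exists_linEquiv p hp
  set E := (sigmaEquiv T : MvPolynomial (Fin (n + 1)) ℂ ≃+* MvPolynomial (Fin (n + 1)) ℂ)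
    with hE
  have hmem : ∀ g : MvPolynomial (Fin (n + 1)) ℂ,
      g ∈ homIdealOfPoint p ↔ E g ∈ homIdealOfPoint (e0 n) := by
    intro g
    have key : ∀ t : ℂ, MvPolynomial.eval (t • e0 n) (E g)
        = MvPolynomial.eval ((t * c) • p) g := by
      intro t
      rw [hE]
      have : (E g : MvPolynomial (Fin (n + 1)) ℂ) = sigma T.toLinearMap g := rfl
      rw [this, eval_sigma]
      have harg : T.toLinearMap (t • e0 n) = (t * c) • p := by
        rw [map_smul, show T.toLinearMap (e0 n) = c • p from hT, smul_smul]
      rw [harg]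
    constructor
    · intro hg t
      rw [key t]
      exact hg _
    · intro hg t
      have := hg (t * c⁻¹)
      rw [key] at this
      rwa [mul_assoc, inv_mul_cancel₀ hc, mul_one] at this
  have hcomap : homIdealOfPoint p = Ideal.comap E (homIdealOfPoint (e0 n)) := by
    ext g
    rw [Ideal.mem_comap]
    exact hmem g
  have hpow : homIdealOfPoint p ^ k = Ideal.comap E ((homIdealOfPoint (e0 n)) ^ k) := by
    rw [hcomap, ← Ideal.map_symm, ← Ideal.map_symm, Ideal.map_pow]
  rw [hpow, Ideal.mem_comap] at h ⊢
  rw [map_mul] at h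
  rw [m_pow_eq_J] at h ⊢
  rw [hmem, m_e0_eq_J1] at hs
  exact Jid_primary hs h


attribute [local instance] homIdealOfPoint_isPrime

lemma mem_biInf {n : ℕ} {Z : Set (Fin (n + 1) → ℂ)} {f : MvPolynomial (Fin (n + 1)) ℂ} :
    f ∈ (⨅ q ∈ Z, homIdealOfPoint q) ↔ ∀ q ∈ Z, f ∈ homIdealOfPoint q := by
  simp [Ideal.mem_iInf]

lemma exists_multiplier {n : ℕ} {Z : Set (Fin (n + 1) → ℂ)} (hfin : Z.Finite)
    (h0 : ∀ p ∈ Z, p ≠ 0) {p : Fin (n + 1) → ℂ} (hp : p ∈ Z)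
    {f : MvPolynomial (Fin (n + 1)) ℂ} (hf : f ∈ homIdealOfPoint p) :
    ∃ s, s ∉ homIdealOfPoint p ∧ s * f ∈ ⨅ q ∈ Z, homIdealOfPoint q := by
  classical
  set g : (Fin (n + 1) → ℂ) → MvPolynomial (Fin (n + 1)) ℂ := fun q =>
    if h : q ∈ Z ∧ homIdealOfPoint q ≠ homIdealOfPoint p then
      Classical.choose (exists_sep_form (h0 p hp) (h0 q h.1) h.2)
    else 1 with hg
  have hg_mem : ∀ q, q ∈ Z → homIdealOfPoint q ≠ homIdealOfPoint p →
      g q ∈ homIdealOfPoint q := by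
    intro q h1 h2
    rw [hg]
    simp only [dif_pos (And.intro h1 h2)]
    exact (Classical.choose_spec (exists_sep_form (h0 p hp) (h0 q h1) h2)).1
  have hg_ne : ∀ q, MvPolynomial.eval p (g q) ≠ 0 := by
    intro q
    rw [hg]
    by_cases h : q ∈ Z ∧ homIdealOfPoint q ≠ homIdealOfPoint p
    · simp only [dif_pos h]
      exact (Classical.choose_spec (exists_sep_form (h0 p hp) (h0 q h.1) h.2)).2
    · simp only [dif_neg h]
      simp
  refine ⟨∏ q ∈ hfin.toFinset, g q, ?_, ?_⟩
  · intro hmem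
    have := hmem 1
    rw [one_smul, map_prod] at this
    exact Finset.prod_ne_zero_iff.mpr (fun q _ => hg_ne q) this
  · rw [mem_biInf]
    intro q hq
    by_cases h : homIdealOfPoint q = homIdealOfPoint p
    · exact Ideal.mul_mem_left _ _ (h ▸ hf)
    · apply Ideal.mul_mem_right
      obtain ⟨r, hr⟩ := Finset.dvd_prod_of_mem g (hfin.mem_toFinset.mpr hq)
      rw [hr]
      exact Ideal.mul_mem_right _ _ (hg_mem q hq h)

lemma comap_map_eq {n : ℕ} {Z : Set (Fin (n + 1) → ℂ)} (hfin : Z.Finite)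
    (h0 : ∀ p ∈ Z, p ≠ 0) {p : Fin (n + 1) → ℂ} (hp : p ∈ Z) (k : ℕ) :
    Ideal.comap (algebraMap (MvPolynomial (Fin (n + 1)) ℂ)
        (Localization (homIdealOfPoint p).primeCompl))
      (Ideal.map (algebraMap (MvPolynomial (Fin (n + 1)) ℂ)
        (Localization (homIdealOfPoint p).primeCompl))
        ((⨅ q ∈ Z, homIdealOfPoint q) ^ k))
      = (homIdealOfPoint p) ^ k := by
  set R := MvPolynomial (Fin (n + 1)) ℂ
  set Loc := Localization (homIdealOfPoint p).primeCompl
  have hmapI : Ideal.map (algebraMap R Loc) (⨅ q ∈ Z, homIdealOfPoint q)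
      = Ideal.map (algebraMap R Loc) (homIdealOfPoint p) := by
    apply le_antisymm
    · exact Ideal.map_mono (iInf₂_le p hp)
    · rw [Ideal.map_le_iff_le_comap]
      intro f hf
      obtain ⟨s, hs, hsf⟩ := exists_multiplier hfin h0 hp hf
      rw [Ideal.mem_comap,
        IsLocalization.mem_map_algebraMap_iff (homIdealOfPoint p).primeCompl Loc]
      exact ⟨⟨⟨s * f, hsf⟩, ⟨s, hs⟩⟩, by rw [← map_mul, mul_comm]⟩
  rw [Ideal.map_pow, hmapI, ← Ideal.map_pow]
  apply le_antisymm
  · intro f hf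
    rw [Ideal.mem_comap,
      IsLocalization.mem_map_algebraMap_iff (homIdealOfPoint p).primeCompl Loc] at hf
    obtain ⟨⟨⟨g, hg⟩, ⟨s, hs⟩⟩, he⟩ := hf
    have hinj : Function.Injective (algebraMap R Loc) :=
      IsLocalization.injective (M := (homIdealOfPoint p).primeCompl) Loc (le_nonZeroDivisors_of_noZeroDivisors
        (fun h => (h : (0 : R) ∉ homIdealOfPoint p) (Ideal.zero_mem _)))
    have heq : s * f = g := by
      apply hinj
      rw [map_mul, mul_comm]
      exact he
    exact homIdeal_pow_primary (h0 p hp) hs (heq ▸ hg)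
  · exact Ideal.le_comap_map

lemma exists_le_of_prime {n : ℕ} {Z : Set (Fin (n + 1) → ℂ)} (hfin : Z.Finite)
    {Q : Ideal (MvPolynomial (Fin (n + 1)) ℂ)} (hQ : Q.IsPrime)
    (hle : (⨅ p ∈ Z, homIdealOfPoint p) ≤ Q) :
    ∃ p ∈ Z, homIdealOfPoint p ≤ Q := by
  have hEq : (⨅ p ∈ Z, homIdealOfPoint p)
      = hfin.toFinset.inf fun p => homIdealOfPoint p := by
    rw [Finset.inf_eq_iInf]
    exact le_antisymm (le_iInf₂ fun p hp => iInf₂_le p (hfin.mem_toFinset.mp hp))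
      (le_iInf₂ fun p hp => iInf₂_le p (hfin.mem_toFinset.mpr hp))
  obtain ⟨p, hpS, hple⟩ := (hQ.inf_le').mp (hEq ▸ hle)
  exact ⟨p, hfin.mem_toFinset.mp hpS, hple⟩

lemma homIdeal_mem_minimalPrimes {n : ℕ} {Z : Set (Fin (n + 1) → ℂ)} (hfin : Z.Finite)
    (h0 : ∀ p ∈ Z, p ≠ 0) {p : Fin (n + 1) → ℂ} (hp : p ∈ Z) :
    homIdealOfPoint p ∈ (⨅ q ∈ Z, homIdealOfPoint q).minimalPrimes := by
  constructor
  · exact ⟨homIdealOfPoint_isPrime p, iInf₂_le p hp⟩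
  · rintro Q ⟨hQ, hle⟩ hQle
    obtain ⟨q, hqZ, hqle⟩ := exists_le_of_prime hfin hQ hle
    have heq : homIdealOfPoint q = homIdealOfPoint p := by
      by_contra hne
      obtain ⟨g, hgq, hgp⟩ := exists_sep_form (h0 p hp) (h0 q hqZ) hne
      have hmem : g ∈ homIdealOfPoint p := hQle (hqle hgq)
      have := hmem 1
      rw [one_smul] at this
      exact hgp this
    rw [← heq]
    exact hqle

lemma minimalPrime_eq {n : ℕ} {Z : Set (Fin (n + 1) → ℂ)} (hfin : Z.Finite)
    {P : Ideal (MvPolynomial (Fin (n + 1)) ℂ)}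
    (hP : P ∈ (⨅ q ∈ Z, homIdealOfPoint q).minimalPrimes) :
    ∃ p ∈ Z, P = homIdealOfPoint p := by
  obtain ⟨⟨hprime, hle⟩, hmin⟩ := hP
  obtain ⟨p, hpZ, hple⟩ := exists_le_of_prime hfin hprime hle
  exact ⟨p, hpZ, le_antisymm
    (hmin ⟨homIdealOfPoint_isPrime p, iInf₂_le p hpZ⟩ hple) hple⟩


end NZ

/-- Nagata–Zariski: for the radical ideal `I` of a finite set of points `Z`
in `ℙ^n`, the `k`-th symbolic power equals the `k`-th differential power
`⋂_{P ∈ Z} m_P^k`. -/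
theorem symbolicPower_eq_differentialPower {n : ℕ} (Z : Set (Fin (n + 1) → ℂ))
    (hfin : Z.Finite) (hne : Z.Nonempty) (h0 : ∀ p ∈ Z, p ≠ 0)
    (k : ℕ) (hk : 1 ≤ k) :
    symbolicPower (⨅ p ∈ Z, homIdealOfPoint p) k = ⨅ p ∈ Z, (homIdealOfPoint p) ^ k := by
  unfold symbolicPower
  apply le_antisymm
  · refine le_iInf₂ fun p hp => ?_
    refine le_trans (iInf_le _
      ⟨homIdealOfPoint p, NZ.homIdeal_mem_minimalPrimes hfin h0 hp⟩) ?_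
    exact le_of_eq (NZ.comap_map_eq hfin h0 hp k)
  · apply le_iInf
    rintro ⟨P, hP⟩
    obtain ⟨p, hpZ, rfl⟩ := NZ.minimalPrime_eq hfin hP
    refine le_trans (iInf₂_le p hpZ) ?_
    exact le_of_eq (NZ.comap_map_eq hfin h0 hpZ k).symm
end
end

section
/- Let f be a homogeneous polynomial of degree d in C[x_0,...,x_n] whose zero hypersurface has multiplicity exactly m at a point P, with 2 ≤ m < d. Then there exists a direction v ∈ C^{n+1} such that the directional derivative ∂_v f (a homogeneous polynomial of degree d−1) has multiplicity exactly m at P. -/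
open MvPolynomial

noncomputable section

lemma degree_eq_sum_univ {n : ℕ} (t : (Fin (n+1)) →₀ ℕ) : t.degree = ∑ j, t j := by
  rw [Finsupp.degree]
  exact Finset.sum_subset (Finset.subset_univ _) (fun x _ hx => Finsupp.notMem_support_iff.mp hx)

lemma pderiv_comm' {n : ℕ} (i j : Fin (n + 1)) (f : MvPolynomial (Fin (n + 1)) ℂ) :
    pderiv i (pderiv j f) = pderiv j (pderiv i f) := by
  induction f using MvPolynomial.induction_on' with
  | add p q hp hq => simp [map_add, hp, hq]
  | monomial s c =>
    rcases eq_or_ne i j with rfl | hij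
    · rfl
    · simp only [pderiv_monomial]
      rw [tsub_right_comm]
      congr 1
      rw [Finsupp.tsub_apply, Finsupp.tsub_apply, Finsupp.single_eq_of_ne' hij,
        Finsupp.single_eq_of_ne' (Ne.symm hij), Nat.sub_zero, Nat.sub_zero]
      ring

lemma derivList_cons {n : ℕ} (i : Fin (n + 1)) (L : List (Fin (n + 1)))
    (f : MvPolynomial (Fin (n + 1)) ℂ) :
    derivList (i :: L) f = pderiv i (derivList L f) := rfl

lemma derivList_pderiv {n : ℕ} (L : List (Fin (n + 1))) (i : Fin (n + 1))
    (f : MvPolynomial (Fin (n + 1)) ℂ) :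
    derivList L (pderiv i f) = pderiv i (derivList L f) := by
  induction L with
  | nil => rfl
  | cons j L ih => rw [derivList_cons, derivList_cons, ih, pderiv_comm']

lemma derivList_sum_smul {n : ℕ} (L : List (Fin (n + 1))) (v : Fin (n + 1) → ℂ)
    (g : Fin (n + 1) → MvPolynomial (Fin (n + 1)) ℂ) :
    derivList L (∑ i, v i • g i) = ∑ i, v i • derivList L (g i) := by
  induction L with
  | nil => rfl
  | cons j L ih => rw [derivList_cons, ih, map_sum]; simp [derivList_cons]

lemma pderiv_isHomogeneous {n : ℕ} {f : MvPolynomial (Fin (n + 1)) ℂ} {k : ℕ}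
    (hf : f.IsHomogeneous k) (i : Fin (n + 1)) :
    (pderiv i f).IsHomogeneous (k - 1) := by
  rw [f.as_sum, map_sum]
  apply IsHomogeneous.sum
  intro s hs
  rw [pderiv_monomial]
  rcases Nat.eq_zero_or_pos (s i) with h0 | h1
  · rw [h0]; simp [isHomogeneous_zero]
  · apply isHomogeneous_monomial
    have hdeg : s.degree = k := by
      rw [Finsupp.degree_eq_weight_one]; exact hf (mem_support_iff.mp hs)
    rw [degree_eq_sum_univ] at hdeg ⊢
    have key : ∀ j : Fin (n+1), ((s - Finsupp.single i 1 : Fin (n+1) →₀ ℕ) j) = s j - (if i = j then 1 else 0) := by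
      intro j; rw [Finsupp.tsub_apply, Finsupp.single_apply]
    rw [← Finset.sum_erase_add _ _ (Finset.mem_univ i)]
    rw [← Finset.sum_erase_add _ _ (Finset.mem_univ i)] at hdeg
    have he : ∑ j ∈ Finset.univ.erase i, ((s - Finsupp.single i 1 : Fin (n+1) →₀ ℕ) j)
        = ∑ j ∈ Finset.univ.erase i, s j :=
      Finset.sum_congr rfl fun j hj => by
        rw [key, if_neg (Finset.ne_of_mem_erase hj).symm, Nat.sub_zero]
    have hi : ((s - Finsupp.single i 1 : Fin (n+1) →₀ ℕ) i) = s i - 1 := by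
      rw [key, if_pos rfl]
    rw [he, hi]
    omega

lemma euler_monomial {n : ℕ} (p : Fin (n + 1) → ℂ) (s : (Fin (n+1)) →₀ ℕ) (c : ℂ) :
    ∑ i, p i * eval p (pderiv i (monomial s c)) = (s.degree : ℂ) * eval p (monomial s c) := by
  have hprod : ∀ t : (Fin (n+1)) →₀ ℕ, (t.prod fun j e => p j ^ e) = ∏ j, p j ^ t j :=
    fun t => Finsupp.prod_fintype _ _ (fun j => pow_zero _)
  have key : ∀ i : Fin (n+1), p i * (c * (s i : ℕ) * ∏ j, p j ^ ((s - Finsupp.single i 1 : Fin (n+1) →₀ ℕ) j))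
      = (s i : ℂ) * (c * ∏ j, p j ^ s j) := by
    intro i
    rcases Nat.eq_zero_or_pos (s i) with h0 | h1
    · rw [h0]; push_cast; ring
    · rw [← Finset.prod_erase_mul _ _ (Finset.mem_univ i),
        ← Finset.prod_erase_mul _ (fun j => p j ^ s j) (Finset.mem_univ i)]
      rw [Finset.prod_congr rfl fun j hj => by
        rw [Finsupp.tsub_apply, Finsupp.single_eq_of_ne' (Finset.ne_of_mem_erase hj).symm,
          Nat.sub_zero]]
      rw [Finsupp.tsub_apply, Finsupp.single_eq_same]
      have hpow : p i ^ (s i - 1) * p i = p i ^ s i := by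
        conv_rhs => rw [← Nat.sub_add_cancel h1]
        rw [pow_succ]
      rw [← hpow]
      ring
  simp only [pderiv_monomial, eval_monomial, hprod, degree_eq_sum_univ]
  rw [Finset.sum_congr rfl fun i _ => key i, ← Finset.sum_mul]
  push_cast
  ring

lemma euler {n : ℕ} {f : MvPolynomial (Fin (n + 1)) ℂ} {k : ℕ}
    (hf : f.IsHomogeneous k) (p : Fin (n + 1) → ℂ) :
    ∑ i, p i * eval p (pderiv i f) = (k : ℂ) * eval p f := by
  have expand : ∀ i : Fin (n+1), eval p (pderiv i f)
      = ∑ s ∈ f.support, eval p (pderiv i (monomial s (coeff s f))) := by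
    intro i
    conv_lhs => rw [f.as_sum]
    rw [map_sum, map_sum]
  calc ∑ i, p i * eval p (pderiv i f)
      = ∑ s ∈ f.support, ∑ i, p i * eval p (pderiv i (monomial s (coeff s f))) := by
        simp only [expand, Finset.mul_sum]; exact Finset.sum_comm
    _ = ∑ s ∈ f.support, (k : ℂ) * eval p (monomial s (coeff s f)) := by
        refine Finset.sum_congr rfl fun s hs => ?_
        rw [euler_monomial]
        congr 2
        rw [Finsupp.degree_eq_weight_one]; exact hf (mem_support_iff.mp hs)
    _ = (k : ℂ) * eval p f := by
        rw [← Finset.mul_sum, ← map_sum, ← f.as_sum]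

lemma derivList_isHomogeneous {n : ℕ} {f : MvPolynomial (Fin (n + 1)) ℂ} {d : ℕ}
    (hf : f.IsHomogeneous d) (L : List (Fin (n + 1))) :
    (derivList L f).IsHomogeneous (d - L.length) := by
  induction L with
  | nil => exact hf
  | cons i L ih =>
    rw [derivList_cons]
    have := pderiv_isHomogeneous ih i
    rwa [Nat.sub_sub, show L.length + 1 = (i :: L).length from rfl] at this

lemma key_eval {n : ℕ} {f : MvPolynomial (Fin (n + 1)) ℂ} {d : ℕ}
    (hf : f.IsHomogeneous d) (p : Fin (n + 1) → ℂ) (L : List (Fin (n + 1))) :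
    eval p (derivList L (∑ i, p i • pderiv i f))
      = ((d - L.length : ℕ) : ℂ) * eval p (derivList L f) := by
  rw [derivList_sum_smul, map_sum]
  calc ∑ i, eval p (p i • derivList L (pderiv i f))
      = ∑ i, p i * eval p (pderiv i (derivList L f)) := by
        refine Finset.sum_congr rfl fun i _ => ?_
        rw [derivList_pderiv, smul_eq_C_mul, map_mul, eval_C]
    _ = _ := euler (derivList_isHomogeneous hf L) p

/-- if a hypersurface `{f = 0}` of degree `d` has multiplicity exactly `m`
at a point `P`, with `2 ≤ m < d`, then some directional derivative `∂_v f` has multiplicity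
exactly `m` at `P`. -/
theorem exists_directional_derivative_same_multiplicity {n : ℕ}
    (f : MvPolynomial (Fin (n + 1)) ℂ) (d : ℕ) (hf : MvPolynomial.IsHomogeneous f d)
    (p : Fin (n + 1) → ℂ) (hp : p ≠ 0) (m : ℕ) (hm2 : 2 ≤ m) (hmd : m < d)
    (hmult : VanishTo f p m ∧ ¬ VanishTo f p (m + 1)) :
    ∃ v : Fin (n + 1) → ℂ,
      VanishTo (∑ i, v i • MvPolynomial.pderiv i f) p m ∧
      ¬ VanishTo (∑ i, v i • MvPolynomial.pderiv i f) p (m + 1) := by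
  obtain ⟨hvan, hnvan⟩ := hmult
  unfold VanishTo at *
  push_neg at hnvan
  obtain ⟨L, hLlen, hLne⟩ := hnvan
  have hLm : L.length = m := by
    by_contra h
    exact hLne (hvan L (by omega))
  refine ⟨p, fun L' hL' => ?_, ?_⟩
  · rw [key_eval hf, hvan L' hL', mul_zero]
  · push_neg
    refine ⟨L, hLlen, ?_⟩
    rw [key_eval hf, hLm]
    exact mul_ne_zero (Nat.cast_ne_zero.mpr (by omega)) hLne
end
end

section
/- Let H_1, ..., H_d be d ≥ 3 lines in P^2 in general position (no three concurrent), and let Z be the set of the binomial(d,2) intersection points H_i ∩ H_j (i < j). If F is a plane curve of degree d with multiplicity at least 2 at every point of Z, then F is the union H_1 ∪ ... ∪ H_d (as divisors, F = H_1 + ... + H_d). -/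
open MvPolynomial

noncomputable section

section Helpers

lemma eval_linForm (a x : Fin 3 → ℂ) : eval x (linForm a) = ∑ s, a s * x s := by
  simp [linForm]

lemma exists_ne_zero_coord {a : Fin 3 → ℂ} (ha : a ≠ 0) : ∃ s₀, a s₀ ≠ 0 := by
  by_contra h; push_neg at h; exact ha (funext h)

lemma linForm_ne_zero {a : Fin 3 → ℂ} (ha : a ≠ 0) : linForm a ≠ 0 := by
  intro h
  apply ha
  funext s
  have := congrArg (eval (Pi.single s 1)) h
  rw [eval_linForm] at this
  simpa [Pi.single_apply, Finset.sum_ite_eq'] using this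

lemma isHomog_linForm (a : Fin 3 → ℂ) : (linForm a).IsHomogeneous 1 := by
  apply MvPolynomial.IsHomogeneous.sum
  intro i _
  simpa using (MvPolynomial.isHomogeneous_X ℂ i).C_mul (a i)

lemma triple_ker {a b c : Fin 3 → ℂ} (h : LinearIndependent ℂ ![a, b, c]) {x : Fin 3 → ℂ}
    (h1 : ∑ s, a s * x s = 0) (h2 : ∑ s, b s * x s = 0) (h3 : ∑ s, c s * x s = 0) : x = 0 := by
  have hsp := h.span_eq_top_of_card_eq_finrank (by simp [Module.finrank_fin_fun])
  funext s
  have hmem : (Pi.single s 1 : Fin 3 → ℂ) ∈ Submodule.span ℂ (Set.range ![a, b, c]) := by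
    rw [hsp]; trivial
  obtain ⟨c', hc'⟩ := (Submodule.mem_span_range_iff_exists_fun ℂ).mp hmem
  have hx : x s = ∑ t, (Pi.single s 1 : Fin 3 → ℂ) t * x t := by
    simp [Pi.single_apply, Finset.sum_ite_eq']
  rw [hx, ← hc']
  simp only [Finset.sum_apply, Pi.smul_apply, smul_eq_mul, Finset.sum_mul]
  rw [Finset.sum_comm]
  rw [Fin.sum_univ_three]
  simp only [Matrix.cons_val_zero, Matrix.cons_val_one, Matrix.head_cons, Matrix.cons_val_two,
    Matrix.tail_cons]
  simp only [mul_assoc, ← Finset.mul_sum]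
  rw [h1, h2, h3]
  simp

lemma dot_comb (a u v : Fin 3 → ℂ) (k l : ℂ) :
    ∑ s, a s * (k • u + l • v) s = k * (∑ s, a s * u s) + l * (∑ s, a s * v s) := by
  simp only [Pi.add_apply, Pi.smul_apply, smul_eq_mul, mul_add, Finset.sum_add_distrib,
    Finset.mul_sum]
  congr 1 <;> (apply Finset.sum_congr rfl; intros; ring)

lemma dot_param (a p q : Fin 3 → ℂ) (t : ℂ) :
    ∑ s, a s * (p s + q s * t) = (∑ s, a s * p s) + t * (∑ s, a s * q s) := by
  simp only [mul_add, Finset.sum_add_distrib, Finset.mul_sum]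
  congr 1
  apply Finset.sum_congr rfl; intros; ring

end Helpers

section KernelGeometry

/-- the kernel of a nonzero covector has a 2-element basis with decomposition. -/
lemma ker_basis {a : Fin 3 → ℂ} (ha : a ≠ 0) :
    ∃ u v : Fin 3 → ℂ, (∑ s, a s * u s) = 0 ∧ (∑ s, a s * v s) = 0 ∧
      LinearIndependent ℂ ![u, v] ∧
      ∀ x : Fin 3 → ℂ, (∑ s, a s * x s) = 0 → ∃ α β : ℂ, x = α • u + β • v := by
  obtain ⟨s₀, hs₀⟩ := exists_ne_zero_coord ha
  set f : (Fin 3 → ℂ) →ₗ[ℂ] ℂ :=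
    { toFun := fun x => ∑ s, a s * x s
      map_add' := by intro x y; simp [mul_add, Finset.sum_add_distrib]
      map_smul' := by intro c x; simp [Finset.mul_sum]; congr 1; funext s; ring } with hf
  have hsurj : LinearMap.range f = ⊤ := by
    rw [LinearMap.range_eq_top]
    intro c
    refine ⟨fun t => if t = s₀ then c / a s₀ else 0, ?_⟩
    simp [hf, Finset.sum_ite_eq', mul_div_cancel₀, hs₀]
  have hrank : Module.finrank ℂ ↥(LinearMap.ker f) = 2 := by
    have := LinearMap.finrank_range_add_finrank_ker f
    rw [hsurj, finrank_top, Module.finrank_self, Module.finrank_fin_fun] at this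
    omega
  set B := (Module.finBasis ℂ ↥(LinearMap.ker f)).reindex (finCongr hrank) with hB
  set u : Fin 3 → ℂ := (B 0 : Fin 3 → ℂ) with hu
  set v : Fin 3 → ℂ := (B 1 : Fin 3 → ℂ) with hv
  have hmem : ∀ i : Fin 2, f ((B i : LinearMap.ker f) : Fin 3 → ℂ) = 0 := fun i => (B i).2
  refine ⟨u, v, hmem 0, hmem 1, ?_, ?_⟩
  · have hind := B.linearIndependent.map' (LinearMap.ker f).subtype
      (Submodule.ker_subtype _)
    have : ![u, v] = (LinearMap.ker f).subtype ∘ (fun i => B i) := by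
      funext i
      fin_cases i <;> rfl
    rw [this]
    exact hind
  · intro x hx
    have hxk : x ∈ LinearMap.ker f := by
      rw [LinearMap.mem_ker]; exact hx
    have hrepr := B.sum_repr ⟨x, hxk⟩
    refine ⟨B.repr ⟨x, hxk⟩ 0, B.repr ⟨x, hxk⟩ 1, ?_⟩
    have h2 : ((∑ i, B.repr ⟨x, hxk⟩ i • B i : ↥(LinearMap.ker f)) : Fin 3 → ℂ) = x :=
      congrArg (fun z : ↥(LinearMap.ker f) => (z : Fin 3 → ℂ)) hrepr
    rw [Fin.sum_univ_two] at h2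
    push_cast at h2
    exact h2.symm

/-- extend an independent pair of covectors to a triple. -/
lemma pair_extend {a b : Fin 3 → ℂ} (h : LinearIndependent ℂ ![a, b]) :
    ∃ c, LinearIndependent ℂ ![a, b, c] := by
  have hne : ∃ c, c ∉ Submodule.span ℂ (Set.range ![a, b]) := by
    by_contra hc
    push_neg at hc
    have htop : Submodule.span ℂ (Set.range ![a, b]) = ⊤ := by
      rw [Submodule.eq_top_iff']; exact hc
    have h3 : Module.finrank ℂ (Fin 3 → ℂ) = 3 := Module.finrank_fin_fun ℂ
    have hle : Module.finrank ℂ ↥(Submodule.span ℂ (Set.range ![a, b])) ≤ 2 := by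
      apply le_trans (finrank_span_le_card _)
      simp only [Set.toFinset_range]
      apply le_trans (Finset.card_image_le)
      simp
    rw [htop, finrank_top, h3] at hle
    omega
  obtain ⟨c, hc⟩ := hne
  refine ⟨c, ?_⟩
  have : ![a, b, c] = Fin.snoc ![a, b] c := by
    funext i
    fin_cases i <;> rfl
  rw [this, linearIndependent_fin_snoc]
  exact ⟨h, hc⟩

/-- two independent covectors cannot both vanish on two independent vectors. -/
lemma pair_dim {a b u v : Fin 3 → ℂ} (hab : LinearIndependent ℂ ![a, b])
    (hau : ∑ s, a s * u s = 0) (hav : ∑ s, a s * v s = 0)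
    (hbu : ∑ s, b s * u s = 0) (hbv : ∑ s, b s * v s = 0)
    (huv : LinearIndependent ℂ ![u, v]) : False := by
  obtain ⟨c, habc⟩ := pair_extend hab
  set w : Fin 3 → ℂ := (∑ s, c s * v s) • u + (-(∑ s, c s * u s)) • v with hw
  have hwa : ∑ s, a s * w s = 0 := by rw [hw, dot_comb, hau, hav]; ring
  have hwb : ∑ s, b s * w s = 0 := by rw [hw, dot_comb, hbu, hbv]; ring
  have hwc : ∑ s, c s * w s = 0 := by rw [hw, dot_comb]; ring
  have hw0 := triple_ker habc hwa hwb hwc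
  have hpair := (LinearIndependent.pair_iff.mp huv) (∑ s, c s * v s) (-(∑ s, c s * u s))
    (by rw [← hw]; exact hw0)
  have hcu : ∑ s, c s * u s = 0 := by
    have := hpair.2; simpa using this
  have hcv : ∑ s, c s * v s = 0 := hpair.1
  have hu0 : u = 0 := triple_ker habc hau hbu hcu
  have := huv.ne_zero 0
  simp [hu0] at this

/-- extract independence of subfamilies from `GenPos`. -/
lemma genpos_comp {d : ℕ} {a : Fin d → (Fin 3 → ℂ)} (hgen : GenPos a) {m : ℕ}
    (e : Fin m → Fin d) (he : Function.Injective e) (hm : m ≤ 3) :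
    LinearIndependent ℂ (fun k => a (e k)) := by
  set S : Finset (Fin d) := Finset.image e Finset.univ with hS
  have hcard : S.card ≤ 3 := by
    rw [hS, Finset.card_image_of_injective _ he]
    simpa using hm
  have h := hgen S hcard
  have hlift : Function.Injective (fun k : Fin m => (⟨e k, by simp [hS]⟩ : {x // x ∈ S})) := by
    intro x y hxy
    apply he
    exact congrArg Subtype.val hxy
  exact h.comp _ hlift

lemma genpos_pair {d : ℕ} {a : Fin d → (Fin 3 → ℂ)} (hgen : GenPos a) {i j : Fin d}
    (hij : i ≠ j) : LinearIndependent ℂ ![a i, a j] := by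
  have he : Function.Injective ![i, j] := by
    intro x y hxy
    fin_cases x <;> fin_cases y <;> simp_all
  have := genpos_comp hgen ![i, j] he (by omega)
  have heq : (fun k => a (![i, j] k)) = ![a i, a j] := by
    funext k; fin_cases k <;> simp
  rwa [heq] at this

lemma genpos_triple {d : ℕ} {a : Fin d → (Fin 3 → ℂ)} (hgen : GenPos a) {i j k : Fin d}
    (hij : i ≠ j) (hik : i ≠ k) (hjk : j ≠ k) : LinearIndependent ℂ ![a i, a j, a k] := by
  have he : Function.Injective ![i, j, k] := by
    intro x y hxy
    fin_cases x <;> fin_cases y <;> simp_all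
  have := genpos_comp hgen ![i, j, k] he (by omega)
  have heq : (fun m => a (![i, j, k] m)) = ![a i, a j, a k] := by
    funext m; fin_cases m <;> simp
  rwa [heq] at this

end KernelGeometry

section Substitution

def sigmaSub (a : Fin 3 → ℂ) (s₀ : Fin 3) : MvPolynomial (Fin 3) ℂ →ₐ[ℂ] MvPolynomial (Fin 3) ℂ :=
  MvPolynomial.aeval (fun s => if s = s₀ then X s₀ - C (a s₀)⁻¹ * linForm a else X s)

lemma sigmaSub_C (a : Fin 3 → ℂ) (s₀ : Fin 3) (c : ℂ) : sigmaSub a s₀ (C c) = C c := by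
  simp [sigmaSub, MvPolynomial.algebraMap_eq]

lemma sigmaSub_X (a : Fin 3 → ℂ) (s₀ s : Fin 3) :
    X s - sigmaSub a s₀ (X s) = if s = s₀ then C (a s₀)⁻¹ * linForm a else 0 := by
  by_cases hs : s = s₀
  · subst hs; simp [sigmaSub]
  · simp [sigmaSub, hs]

lemma sigmaSub_linForm (a : Fin 3 → ℂ) (s₀ : Fin 3) (h : a s₀ ≠ 0) :
    sigmaSub a s₀ (linForm a) = 0 := by
  have : sigmaSub a s₀ (linForm a)
      = linForm a - ∑ s, C (a s) * (X s - sigmaSub a s₀ (X s)) := by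
    rw [linForm, map_sum, ← Finset.sum_sub_distrib]
    congr 1
    funext s
    rw [map_mul, sigmaSub_C]
    ring
  rw [this]
  simp only [sigmaSub_X, mul_ite, mul_zero, Finset.sum_ite_eq', Finset.mem_univ, if_true]
  rw [← mul_assoc, ← map_mul, mul_inv_cancel₀ h]
  simp

lemma sub_sigmaSub_mem (a : Fin 3 → ℂ) (s₀ : Fin 3) (f : MvPolynomial (Fin 3) ℂ) :
    f - sigmaSub a s₀ f ∈ Ideal.span {linForm a} := by
  induction f using MvPolynomial.induction_on with
  | C c => simp [sigmaSub, MvPolynomial.algebraMap_eq]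
  | add f g hf hg =>
      have : f + g - sigmaSub a s₀ (f + g) = (f - sigmaSub a s₀ f) + (g - sigmaSub a s₀ g) := by
        rw [map_add]; ring
      rw [this]; exact Ideal.add_mem _ hf hg
  | mul_X f s hf =>
      have key : f * X s - sigmaSub a s₀ (f * X s)
          = (f - sigmaSub a s₀ f) * X s
            + sigmaSub a s₀ f * (X s - sigmaSub a s₀ (X s)) := by
        rw [map_mul]; ring
      rw [key]
      apply Ideal.add_mem
      · exact Ideal.mul_mem_right _ _ hf
      · apply Ideal.mul_mem_left
        rw [sigmaSub_X]
        by_cases hs : s = s₀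
        · rw [if_pos hs]
          exact Ideal.mul_mem_left _ _ (Ideal.subset_span rfl)
        · rw [if_neg hs]; exact Ideal.zero_mem _

lemma span_linForm_eq_ker (a : Fin 3 → ℂ) (s₀ : Fin 3) (h : a s₀ ≠ 0) :
    Ideal.span {linForm a} = RingHom.ker (sigmaSub a s₀).toRingHom := by
  ext f
  constructor
  · intro hf
    rw [Ideal.mem_span_singleton] at hf
    obtain ⟨g, rfl⟩ := hf
    have : sigmaSub a s₀ (linForm a * g) = 0 := by
      rw [map_mul, sigmaSub_linForm a s₀ h, zero_mul]
    simpa [RingHom.mem_ker] using this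
  · intro hf
    rw [RingHom.mem_ker] at hf
    have h2 := sub_sigmaSub_mem a s₀ f
    have h3 : sigmaSub a s₀ f = 0 := hf
    rwa [h3, sub_zero] at h2

lemma prime_linForm {a : Fin 3 → ℂ} (ha : a ≠ 0) : Prime (linForm a) := by
  obtain ⟨s₀, hs₀⟩ := exists_ne_zero_coord ha
  rw [← Ideal.span_singleton_prime (linForm_ne_zero ha), span_linForm_eq_ker a s₀ hs₀]
  exact RingHom.ker_isPrime _

lemma linForm_dvd_of_vanish {a : Fin 3 → ℂ} (ha : a ≠ 0) (F : MvPolynomial (Fin 3) ℂ)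
    (hvan : ∀ x : Fin 3 → ℂ, (∑ s, a s * x s) = 0 → eval x F = 0) : linForm a ∣ F := by
  obtain ⟨s₀, hs₀⟩ := exists_ne_zero_coord ha
  rw [← Ideal.mem_span_singleton]
  have hσ : sigmaSub a s₀ F = 0 := by
    apply MvPolynomial.funext (q := 0)
    intro x
    rw [map_zero]
    have evcomp : eval x (sigmaSub a s₀ F)
        = eval (fun s => eval x (if s = s₀ then X s₀ - C (a s₀)⁻¹ * linForm a else X s)) F := by
      have hcomp : (MvPolynomial.eval x).comp (sigmaSub a s₀).toRingHom
          = MvPolynomial.eval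
              (fun s => eval x (if s = s₀ then X s₀ - C (a s₀)⁻¹ * linForm a else X s)) := by
        apply MvPolynomial.ringHom_ext
        · intro c; simp [sigmaSub, MvPolynomial.algebraMap_eq]
        · intro s; simp [sigmaSub]
      exact DFunLike.congr_fun hcomp F
    rw [evcomp]
    apply hvan
    have hpt : ∀ s : Fin 3, eval x (if s = s₀ then X s₀ - C (a s₀)⁻¹ * linForm a else X s)
        = x s - (if s = s₀ then (a s₀)⁻¹ * (∑ t, a t * x t) else 0) := by
      intro s
      by_cases hs : s = s₀
      · subst hs; simp [eval_linForm]
      · simp [hs]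
    simp only [hpt, mul_sub, mul_ite, mul_zero, Finset.sum_sub_distrib,
      Finset.sum_ite_eq', Finset.mem_univ, if_true]
    field_simp
    ring
  have h2 := sub_sigmaSub_mem a s₀ F
  rwa [hσ, sub_zero] at h2

lemma linForm_not_dvd {a b : Fin 3 → ℂ} (hab : LinearIndependent ℂ ![a, b]) :
    ¬ linForm a ∣ linForm b := by
  intro hdvd
  have ha : a ≠ 0 := by
    have := hab.ne_zero 0; simpa using this
  obtain ⟨s₀, hs₀⟩ := exists_ne_zero_coord ha
  have hker : ∀ x : Fin 3 → ℂ, (∑ s, a s * x s) = 0 → (∑ s, b s * x s) = 0 := by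
    intro x hx
    obtain ⟨u, hu⟩ := hdvd
    have := congrArg (eval x) hu
    rw [eval_linForm, map_mul, eval_linForm, hx, zero_mul] at this
    exact this
  have hprop : ∀ s : Fin 3, b s = (b s₀ / a s₀) * a s := by
    intro s
    by_cases hs : s = s₀
    · subst hs; field_simp
    · set x : Fin 3 → ℂ := fun t => (if t = s then a s₀ else 0) + (if t = s₀ then -(a s) else 0)
        with hx
      have hax : ∑ t, a t * x t = 0 := by
        simp only [hx, mul_add, Finset.sum_add_distrib, mul_ite, mul_zero,
          Finset.sum_ite_eq', Finset.mem_univ, if_true]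
        ring
      have hbx := hker x hax
      simp only [hx, mul_add, Finset.sum_add_distrib, mul_ite, mul_zero,
        Finset.sum_ite_eq', Finset.mem_univ, if_true] at hbx
      field_simp
      linear_combination hbx
  have hpair := LinearIndependent.pair_iff.mp hab (b s₀ / a s₀) (-1)
    (by
      funext s
      simp only [Pi.add_apply, Pi.smul_apply, smul_eq_mul, Pi.zero_apply]
      rw [← hprop s]
      ring)
  have : (-1 : ℂ) = 0 := hpair.2
  norm_num at this

end Substitution

section LineRestrict

def lineRestrict (p q : Fin 3 → ℂ) : MvPolynomial (Fin 3) ℂ →ₐ[ℂ] Polynomial ℂ :=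
  MvPolynomial.aeval (fun s => Polynomial.C (p s) + Polynomial.C (q s) * Polynomial.X)

lemma lineRestrict_eval (p q : Fin 3 → ℂ) (f : MvPolynomial (Fin 3) ℂ) (t : ℂ) :
    (lineRestrict p q f).eval t = eval (fun s => p s + q s * t) f := by
  have hcomp : (Polynomial.evalRingHom t).comp (lineRestrict p q).toRingHom
      = (MvPolynomial.eval (fun s => p s + q s * t)) := by
    apply MvPolynomial.ringHom_ext
    · intro c; simp [lineRestrict, MvPolynomial.algebraMap_eq]
    · intro s; simp [lineRestrict]
  exact DFunLike.congr_fun hcomp f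

lemma lineRestrict_natDegree_le (p q : Fin 3 → ℂ) (f : MvPolynomial (Fin 3) ℂ) :
    (lineRestrict p q f).natDegree ≤ f.totalDegree := by
  conv_lhs => rw [f.as_sum]
  rw [map_sum]
  apply Polynomial.natDegree_sum_le_of_forall_le
  intro m hm
  rw [lineRestrict, MvPolynomial.aeval_monomial]
  apply le_trans (Polynomial.natDegree_mul_le)
  have h1 : (algebraMap ℂ (Polynomial ℂ) (coeff m f)).natDegree = 0 := by
    simp [Polynomial.natDegree_C]
  rw [h1, zero_add]
  calc (m.prod fun s e => (Polynomial.C (p s) + Polynomial.C (q s) * Polynomial.X) ^ e).natDegree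
      ≤ ∑ s ∈ m.support,
          ((Polynomial.C (p s) + Polynomial.C (q s) * Polynomial.X) ^ (m s)).natDegree := by
        rw [Finsupp.prod]
        exact Polynomial.natDegree_prod_le _ _
    _ ≤ ∑ s ∈ m.support, m s := by
        apply Finset.sum_le_sum
        intro s _
        have hlin : (Polynomial.C (p s) + Polynomial.C (q s) * Polynomial.X).natDegree ≤ 1 := by
          apply le_trans (Polynomial.natDegree_add_le _ _)
          have h2 : (Polynomial.C (q s) * Polynomial.X).natDegree ≤ 1 :=
            le_trans Polynomial.natDegree_mul_le (by simp)
          simp only [Polynomial.natDegree_C]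
          omega
        calc ((Polynomial.C (p s) + Polynomial.C (q s) * Polynomial.X) ^ (m s)).natDegree
            ≤ (m s) * (Polynomial.C (p s) + Polynomial.C (q s) * Polynomial.X).natDegree :=
              Polynomial.natDegree_pow_le
          _ ≤ (m s) * 1 := Nat.mul_le_mul_left _ hlin
          _ = m s := Nat.mul_one _
    _ ≤ f.totalDegree := by
        have := MvPolynomial.le_totalDegree hm
        simpa [Finsupp.sum] using this

lemma lineRestrict_derivative (p q : Fin 3 → ℂ) (f : MvPolynomial (Fin 3) ℂ) :
    (lineRestrict p q f).derivative
      = ∑ s, Polynomial.C (q s) * lineRestrict p q (pderiv s f) := by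
  induction f using MvPolynomial.induction_on with
  | C c => simp [lineRestrict, MvPolynomial.algebraMap_eq]
  | add f g hf hg =>
      simp only [map_add, Polynomial.derivative_add, hf, hg, mul_add, Finset.sum_add_distrib]
  | mul_X f s hf =>
      have hXs : lineRestrict p q (X s)
          = Polynomial.C (p s) + Polynomial.C (q s) * Polynomial.X := by
        simp [lineRestrict]
      rw [map_mul, Polynomial.derivative_mul, hf, hXs]
      have hds : ∀ u : Fin 3, lineRestrict p q (pderiv u (f * X s))
          = lineRestrict p q (pderiv u f)
              * (Polynomial.C (p s) + Polynomial.C (q s) * Polynomial.X)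
            + (if s = u then lineRestrict p q f else 0) := by
        intro u
        rw [pderiv_mul]
        by_cases hu : s = u
        · subst hu; simp [pderiv_X, hXs]
        · rw [if_neg hu]
          have : pderiv u (X s : MvPolynomial (Fin 3) ℂ) = 0 := by
            rw [pderiv_X]
            simp [Pi.single_apply, Ne.symm hu]
          rw [this]
          simp [hXs]
      simp only [hds, mul_add, Finset.sum_add_distrib, mul_ite, mul_zero,
        Finset.sum_ite_eq, Finset.mem_univ, if_true]
      rw [Polynomial.derivative_add, Polynomial.derivative_C, Polynomial.derivative_C_mul,
        Polynomial.derivative_X]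
      simp only [Finset.sum_mul, mul_assoc, zero_add, mul_one]
      ring

end LineRestrict

section Counting

lemma double_roots_bound (g : Polynomial ℂ) (hg : g ≠ 0) (T : Finset ℂ)
    (h : ∀ t ∈ T, 2 ≤ g.rootMultiplicity t) : 2 * T.card ≤ g.natDegree := by
  classical
  have hsub : T ⊆ g.roots.toFinset := by
    intro t ht
    rw [Multiset.mem_toFinset, Polynomial.mem_roots hg]
    have h2 := h t ht
    rw [← Polynomial.rootMultiplicity_pos hg]
    omega
  calc 2 * T.card = ∑ _t ∈ T, 2 := by rw [Finset.sum_const]; ring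
    _ ≤ ∑ t ∈ T, g.roots.count t := by
        apply Finset.sum_le_sum
        intro t ht
        rw [Polynomial.count_roots]
        exact h t ht
    _ ≤ ∑ t ∈ g.roots.toFinset, g.roots.count t := Finset.sum_le_sum_of_subset hsub
    _ = Multiset.card g.roots := Multiset.toFinset_sum_count_eq _
    _ ≤ g.natDegree := Polynomial.card_roots' g

lemma prod_primes_dvd' {ι : Type*} (ℓ : ι → MvPolynomial (Fin 3) ℂ)
    (hp : ∀ i, Prime (ℓ i)) (hnd : ∀ i j, i ≠ j → ¬ ℓ i ∣ ℓ j) (s : Finset ι) :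
    ∀ F : MvPolynomial (Fin 3) ℂ, (∀ i ∈ s, ℓ i ∣ F) → (∏ i ∈ s, ℓ i) ∣ F := by
  classical
  induction s using Finset.induction_on with
  | empty => intro F _; simp
  | @insert i s hi ih =>
      intro F hdvd
      obtain ⟨G, hG⟩ := hdvd i (Finset.mem_insert_self i s)
      rw [Finset.prod_insert hi, hG]
      apply mul_dvd_mul_left
      apply ih
      intro j hj
      have hji : j ≠ i := fun hji => hi (hji ▸ hj)
      have hdj : ℓ j ∣ ℓ i * G := hG ▸ hdvd j (Finset.mem_insert_of_mem hj)
      rcases (hp j).2.2 _ _ hdj with h1 | h2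
      · exact absurd h1 (hnd j i hji)
      · exact h2

lemma homog_eval_smul {F : MvPolynomial (Fin 3) ℂ} {n : ℕ} (hF : F.IsHomogeneous n)
    (t : ℂ) (x : Fin 3 → ℂ) : eval (t • x) F = t ^ n * eval x F := by
  conv_lhs => rw [F.as_sum]
  conv_rhs => rw [F.as_sum]
  rw [map_sum, map_sum, Finset.mul_sum]
  apply Finset.sum_congr rfl
  intro m hm
  rw [MvPolynomial.eval_monomial, MvPolynomial.eval_monomial]
  have hdeg : (∑ s ∈ m.support, m s) = n := by
    have := hF (MvPolynomial.mem_support_iff.mp hm)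
    rw [show (Finsupp.weight 1 : (Fin 3 →₀ ℕ) →+ ℕ) = Finsupp.weight (fun _ => 1) from rfl,
      ← Finsupp.degree_eq_weight_one] at this
    exact this
  have : (m.prod fun s e => (t • x) s ^ e) = t ^ n * m.prod fun s e => x s ^ e := by
    rw [Finsupp.prod, Finsupp.prod]
    have : ∀ s ∈ m.support, ((t • x) s) ^ (m s) = t ^ (m s) * (x s) ^ (m s) := by
      intro s _
      simp [mul_pow]
    rw [Finset.prod_congr rfl this, Finset.prod_mul_distrib, Finset.prod_pow_eq_pow_sum]
    rw [hdeg]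
  rw [this]
  ring

lemma eq_C_mul_of_dvd {F P : MvPolynomial (Fin 3) ℂ} {d : ℕ} (hF0 : F ≠ 0)
    (hFd : F.IsHomogeneous d) (hPd : P.IsHomogeneous d) (hP0 : P ≠ 0) (hdvd : P ∣ F) :
    ∃ c : ℂ, c ≠ 0 ∧ F = C c * P := by
  obtain ⟨g, hg⟩ := hdvd
  have hg0 : g ≠ 0 := by rintro rfl; rw [mul_zero] at hg; exact hF0 hg
  have hcomp : ∀ k, 1 ≤ k → homogeneousComponent k g = 0 := by
    intro k hk
    by_cases hkle : k ≤ g.totalDegree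
    · have h1 : homogeneousComponent (d + k) F = 0 := by
        rw [homogeneousComponent_of_mem ((mem_homogeneousSubmodule _ _).mpr hFd)]
        rw [if_neg (show d + k ≠ d by omega)]
      have h2 : F = ∑ k' ∈ Finset.range (g.totalDegree + 1),
          P * homogeneousComponent k' g := by
        rw [← Finset.mul_sum, sum_homogeneousComponent, hg]
      rw [h2, map_sum] at h1
      have h3 : ∀ k' ∈ Finset.range (g.totalDegree + 1),
          homogeneousComponent (d + k) (P * homogeneousComponent k' g)
            = if k' = k then P * homogeneousComponent k' g else 0 := by
        intro k' _
        rw [homogeneousComponent_of_mem ((mem_homogeneousSubmodule _ _).mpr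
          (hPd.mul (homogeneousComponent_isHomogeneous k' g)))]
        by_cases hkk : k' = k
        · rw [hkk, if_pos rfl, if_pos rfl]
        · rw [if_neg (show d + k ≠ d + k' by omega), if_neg hkk]
      rw [Finset.sum_congr rfl h3,
        Finset.sum_ite_eq' (Finset.range (g.totalDegree + 1)) k] at h1
      rw [if_pos (Finset.mem_range.mpr (by omega))] at h1
      rcases mul_eq_zero.mp h1 with h | h
      · exact absurd h hP0
      · exact h
    · exact homogeneousComponent_eq_zero k g (show g.totalDegree < k by omega)
  have hgC : g = C (coeff 0 g) := by
    conv_lhs => rw [← sum_homogeneousComponent g]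
    rw [Finset.sum_eq_single_of_mem 0 (Finset.mem_range.mpr (by omega))
      (fun k _ hk => hcomp k (by omega))]
    exact homogeneousComponent_zero g
  refine ⟨coeff 0 g, ?_, ?_⟩
  · intro h; rw [h] at hgC; simp at hgC; exact hg0 hgC
  · rw [hg]
    conv_lhs => rw [hgC]
    ring

end Counting

section MainDvd

lemma line_dvd {d : ℕ} (hd : 3 ≤ d) (a : Fin d → (Fin 3 → ℂ)) (hgen : GenPos a)
    (F : MvPolynomial (Fin 3) ℂ) (hF0 : F ≠ 0) (hFd : MvPolynomial.IsHomogeneous F d)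
    (hmult : ∀ p : Fin 3 → ℂ, p ≠ 0 →
      (∃ i j : Fin d, i ≠ j ∧ (∑ s, a i s * p s) = 0 ∧ (∑ s, a j s * p s) = 0) →
      VanishTo F p 2) (i : Fin d) : linForm (a i) ∣ F := by
  classical
  have ha : a i ≠ 0 := by
    have h1 := hgen {i} (by simp)
    exact h1.ne_zero ⟨i, by simp⟩
  obtain ⟨u, v, hau, hav, huv, hdecomp⟩ := ker_basis ha
  -- no other covector kills both u and v
  have hnotboth : ∀ j : Fin d, j ≠ i →
      ¬ ((∑ s, a j s * u s) = 0 ∧ (∑ s, a j s * v s) = 0) := by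
    intro j hji ⟨h1, h2⟩
    exact pair_dim (genpos_pair hgen hji) h1 h2 hau hav huv
  -- bad parameter values
  set B : Fin d → Set ℂ := fun j =>
    {t : ℂ | j ≠ i ∧ (∑ s, a j s * u s) + t * (∑ s, a j s * v s) = 0} with hBdef
  have hBfin : ∀ j, (B j).Finite := by
    intro j
    apply Set.Subsingleton.finite
    intro t1 h1 t2 h2
    by_contra hne
    have hv0 : (∑ s, a j s * v s) = 0 := by
      have := sub_eq_zero.mpr (h1.2.trans h2.2.symm)
      have h3 : (t1 - t2) * (∑ s, a j s * v s) = 0 := by linear_combination this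
      rcases mul_eq_zero.mp h3 with h | h
      · exact absurd (sub_eq_zero.mp h) hne
      · exact h
    have hu0 : (∑ s, a j s * u s) = 0 := by
      have h4 := h1.2
      rw [hv0, mul_zero, add_zero] at h4
      exact h4
    exact hnotboth j h1.1 ⟨hu0, hv0⟩
  have hBadfin : (⋃ j, B j).Finite := Set.finite_iUnion hBfin
  obtain ⟨s1, hs1⟩ := hBadfin.infinite_compl.nonempty
  obtain ⟨s2, hs2⟩ := (hBadfin.union (Set.finite_singleton s1)).infinite_compl.nonempty
  rw [Set.compl_union, Set.mem_inter_iff] at hs2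
  have hs12 : s1 ≠ s2 := fun h => hs2.2 (by simp [h])
  have hs1' : ∀ j, j ≠ i → (∑ s, a j s * u s) + s1 * (∑ s, a j s * v s) ≠ 0 := by
    intro j hji h
    exact hs1 (Set.mem_iUnion.mpr ⟨j, hji, h⟩)
  have hs2' : ∀ j, j ≠ i → (∑ s, a j s * u s) + s2 * (∑ s, a j s * v s) ≠ 0 := by
    intro j hji h
    exact hs2.1 (Set.mem_iUnion.mpr ⟨j, hji, h⟩)
  set p : Fin 3 → ℂ := (1 : ℂ) • u + s1 • v with hp
  set q : Fin 3 → ℂ := (1 : ℂ) • u + s2 • v with hq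
  have hap : ∑ s, a i s * p s = 0 := by rw [hp, dot_comb, hau, hav]; ring
  have haq : ∑ s, a i s * q s = 0 := by rw [hq, dot_comb, hau, hav]; ring
  have hjp : ∀ j, j ≠ i → (∑ s, a j s * p s) ≠ 0 := by
    intro j hji h
    rw [hp, dot_comb] at h
    exact hs1' j hji (by linear_combination h)
  have hjq : ∀ j, j ≠ i → (∑ s, a j s * q s) ≠ 0 := by
    intro j hji h
    rw [hq, dot_comb] at h
    exact hs2' j hji (by linear_combination h)
  have hpq : LinearIndependent ℂ ![p, q] := by
    rw [LinearIndependent.pair_iff]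
    intro α β hαβ
    have hcomb : (α + β) • u + (α * s1 + β * s2) • v = 0 := by
      rw [← hαβ, hp, hq]
      module
    have h2 := LinearIndependent.pair_iff.mp huv _ _ hcomb
    have hα : α = 0 := by
      have h3 := h2.1
      have h4 := h2.2
      have : α * (s1 - s2) = 0 := by linear_combination h4 - s2 * h3
      rcases mul_eq_zero.mp this with h | h
      · exact h
      · exact absurd (sub_eq_zero.mp h) hs12
    exact ⟨hα, by linear_combination h2.1 - hα⟩
  -- the restricted polynomial vanishes
  have hg0 : lineRestrict p q F = 0 := by
    by_contra hg
    set g := lineRestrict p q F with hgdef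
    set t : Fin d → ℂ := fun j => -(∑ s, a j s * p s) / (∑ s, a j s * q s) with ht
    have hz : ∀ j, j ≠ i → (∑ s, a j s * (p s + q s * t j)) = 0 := by
      intro j hji
      have hq0 := hjq j hji
      rw [dot_param, ht]
      field_simp
      ring
    have hzi : ∀ j : Fin d, (∑ s, a i s * (p s + q s * t j)) = 0 := by
      intro j
      rw [dot_param, hap, haq]
      ring
    have hzne : ∀ j : Fin d, (fun s => p s + q s * t j) ≠ 0 := by
      intro j h
      have hcomb : (1 : ℂ) • p + (t j) • q = 0 := by
        funext s
        have := congrFun h s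
        simpa [mul_comm] using this
      have := (LinearIndependent.pair_iff.mp hpq _ _ hcomb).1
      norm_num at this
    have hvan : ∀ j, j ≠ i → VanishTo F (fun s => p s + q s * t j) 2 := by
      intro j hji
      apply hmult _ (hzne j)
      exact ⟨i, j, Ne.symm hji, hzi j, hz j hji⟩
    have hmul2 : ∀ j, j ≠ i → 2 ≤ g.rootMultiplicity (t j) := by
      intro j hji
      have hroot : g.IsRoot (t j) := by
        rw [Polynomial.IsRoot, hgdef, lineRestrict_eval]
        exact hvan j hji [] (by norm_num)
      have hdroot : (Polynomial.derivative g).IsRoot (t j) := by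
        rw [Polynomial.IsRoot, hgdef, lineRestrict_derivative]
        rw [Polynomial.eval_finset_sum]
        apply Finset.sum_eq_zero
        intro s _
        rw [Polynomial.eval_mul, lineRestrict_eval]
        have : eval (fun s' => p s' + q s' * t j) (pderiv s F) = 0 :=
          hvan j hji [s] (by norm_num)
        rw [this, mul_zero]
      have := (Polynomial.one_lt_rootMultiplicity_iff_isRoot hg).mpr ⟨hroot, hdroot⟩
      omega
    have htinj : Set.InjOn t ↑(Finset.univ.erase i) := by
      intro j hj k hk hjk
      by_contra hne
      have hj' : j ≠ i := Finset.ne_of_mem_erase hj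
      have hk' : k ≠ i := Finset.ne_of_mem_erase hk
      have hzer := triple_ker (genpos_triple hgen (Ne.symm hj') (Ne.symm hk') hne)
        (hzi j) (hz j hj') (by rw [hjk]; exact hz k hk')
      exact hzne j hzer
    set T : Finset ℂ := Finset.image t (Finset.univ.erase i) with hT
    have hTcard : T.card = d - 1 := by
      rw [hT, Finset.card_image_of_injOn htinj, Finset.card_erase_of_mem (Finset.mem_univ i)]
      simp
    have hbound := double_roots_bound g hg T (by
      intro t' ht'
      obtain ⟨j, hj, rfl⟩ := Finset.mem_image.mp ht'
      exact hmul2 j (Finset.ne_of_mem_erase hj))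
    have hdeg : g.natDegree ≤ d := by
      apply le_trans (lineRestrict_natDegree_le p q F)
      rw [hFd.totalDegree hF0]
    omega
  -- the polynomial vanishes along the whole parametrized line
  have heval : ∀ tt : ℂ, eval (fun s => p s + q s * tt) F = 0 := by
    intro tt
    rw [← lineRestrict_eval, hg0]
    simp
  -- it also vanishes at q
  have hq0 : eval q F = 0 := by
    set k := lineRestrict q p F with hk
    have hkroot : ∀ tt : ℂ, tt ≠ 0 → k.IsRoot tt := by
      intro tt h0
      rw [Polynomial.IsRoot, hk, lineRestrict_eval]
      have hfun : (fun s => q s + p s * tt) = tt • (fun s => p s + q s * tt⁻¹) := by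
        funext s
        simp only [Pi.smul_apply, smul_eq_mul]
        field_simp
        ring
      rw [hfun, homog_eval_smul hFd, heval, mul_zero]
    have hk0 : k = 0 := by
      apply Polynomial.eq_zero_of_infinite_isRoot
      apply Set.Infinite.mono (s := ({(0 : ℂ)}ᶜ : Set ℂ))
      · intro tt htt
        exact hkroot tt (by simpa using htt)
      · exact (Set.finite_singleton 0).infinite_compl
    have := congrArg (Polynomial.eval 0) hk0
    rw [hk, lineRestrict_eval] at this
    simpa using this
  -- F vanishes on the kernel of a i
  have hvanker : ∀ x : Fin 3 → ℂ, (∑ s, a i s * x s) = 0 → eval x F = 0 := by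
    intro x hx
    obtain ⟨α, β, hxuv⟩ := hdecomp x hx
    have hΔ : s2 - s1 ≠ 0 := sub_ne_zero.mpr (Ne.symm hs12)
    set A : ℂ := (α * s2 - β) / (s2 - s1) with hA
    set Bc : ℂ := (β - α * s1) / (s2 - s1) with hBc
    have hxpq : x = A • p + Bc • q := by
      rw [hxuv, hp, hq]
      funext s
      simp only [Pi.add_apply, Pi.smul_apply, smul_eq_mul, hA, hBc]
      field_simp
      ring
    by_cases hA0 : A = 0
    · rw [hxpq, hA0, zero_smul, zero_add, homog_eval_smul hFd, hq0, mul_zero]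
    · have hxs : x = A • (fun s => p s + q s * (Bc / A)) := by
        rw [hxpq]
        funext s
        simp only [Pi.add_apply, Pi.smul_apply, smul_eq_mul]
        field_simp
      rw [hxs, homog_eval_smul hFd, heval, mul_zero]
  exact linForm_dvd_of_vanish ha F hvanker

end MainDvd

/-- if `F` is a plane curve of degree `d ≥ 3` with multiplicity at least `2`
at each of the pairwise intersection points of `d` lines in general position, then `F` is
the union of the `d` lines. -/
theorem curve_through_star_is_union_of_lines (d : ℕ) (hd : 3 ≤ d)
    (a : Fin d → (Fin 3 → ℂ)) (hgen : GenPos a)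
    (F : MvPolynomial (Fin 3) ℂ) (hF0 : F ≠ 0) (hFd : MvPolynomial.IsHomogeneous F d)
    (hmult : ∀ p : Fin 3 → ℂ, p ≠ 0 →
      (∃ i j : Fin d, i ≠ j ∧ (∑ s, a i s * p s) = 0 ∧ (∑ s, a j s * p s) = 0) →
      VanishTo F p 2) :
    ∃ c : ℂ, c ≠ 0 ∧ F = MvPolynomial.C c * ∏ i, linForm (a i) := by
  have ha : ∀ i : Fin d, a i ≠ 0 := by
    intro i
    have h1 := hgen {i} (by simp)
    exact h1.ne_zero ⟨i, by simp⟩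
  have hdvd : (∏ i, linForm (a i)) ∣ F := by
    apply prod_primes_dvd' (fun i => linForm (a i))
      (fun i => prime_linForm (ha i))
      (fun i j hij => linForm_not_dvd (genpos_pair hgen hij))
      Finset.univ F
    intro i _
    exact line_dvd hd a hgen F hF0 hFd hmult i
  have hPd : (∏ i, linForm (a i)).IsHomogeneous d := by
    have := MvPolynomial.IsHomogeneous.prod Finset.univ (fun i => linForm (a i))
      (fun _ => 1) (fun i _ => isHomog_linForm (a i))
    simpa using this
  have hP0 : (∏ i, linForm (a i)) ≠ 0 := by
    rw [Finset.prod_ne_zero_iff]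
    exact fun i _ => linForm_ne_zero (ha i)
  exact eq_C_mul_of_dvd hF0 hFd hPd hP0 hdvd
end
end
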